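/- Let γ¹_{11}, γ¹_{12}, γ¹_{22}, γ²_{11}, γ²_{12}, γ²_{22} ∈ ℝ satisfy γ¹_{12} = −γ²_{22}. Then the two equations 2 γ¹_{12} γ²_{12} − 3 γ²_{11} γ¹_{22} + (2 + γ¹_{11}) γ²_{22} = 0 and (γ¹_{12})² − 2 γ¹_{12} γ²_{22} + γ¹_{22} (1 − γ¹_{11} + 2 γ²_{12}) = 0 hold if and only if one of the following holds: (i) γ¹_{12} = 0 and γ¹_{22} = 0; or (ii) γ¹_{22} ≠ 0, γ²_{12} = ½(γ¹_{11} − 1 − 3 (γ¹_{12})² / γ¹_{22}), and γ²_{11} = −(γ¹_{12})³ / (γ¹_{22})² − γ¹_{12} / γ¹_{22}. -/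

import Mathlib

/-- Characterization of projectively flat Type B homogeneous connections
with symmetric Ricci tensor: with `γ¹_{12} = −γ²_{22}`, the two polynomial equations
expressing symmetry of the covariant derivative of the Ricci tensor hold if and only if
either (i) `γ¹_{12} = 0` and `γ¹_{22} = 0`, or (ii) `γ¹_{22} ≠ 0`,
`γ²_{12} = ½(γ¹_{11} − 1 − 3(γ¹_{12})²/γ¹_{22})` and
`γ²_{11} = −(γ¹_{12})³/(γ¹_{22})² − γ¹_{12}/γ¹_{22}`. -/
theorem stmt9 (γ111 γ112 γ122 γ211 γ212 γ222 : ℝ) (hsym : γ112 = -γ222) :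
    (2 * γ112 * γ212 - 3 * γ211 * γ122 + (2 + γ111) * γ222 = 0 ∧
     γ112 ^ 2 - 2 * γ112 * γ222 + γ122 * (1 - γ111 + 2 * γ212) = 0)
      ↔ ((γ112 = 0 ∧ γ122 = 0) ∨
         (γ122 ≠ 0 ∧ γ212 = (1 / 2) * (γ111 - 1 - 3 * γ112 ^ 2 / γ122) ∧
           γ211 = -(γ112 ^ 3 / γ122 ^ 2) - γ112 / γ122)) := by
  have h222 : γ222 = -γ112 := by linarith
  subst h222
  by_cases h : γ122 = 0
  · subst h
    constructor
    · rintro ⟨h1, h2⟩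
      left
      constructor
      · nlinarith [sq_nonneg γ112]
      · rfl
    · rintro (⟨h1, h2⟩ | ⟨h1, _⟩)
      · subst h1; constructor <;> ring
      · exact absurd rfl h1
  · constructor
    · rintro ⟨h1, h2⟩
      right
      refine ⟨h, ?_, ?_⟩
      · field_simp
        linear_combination h2
      · field_simp
        linear_combination (-γ122/3) * h1 + (γ112/3) * h2
    · rintro (⟨h1, h2⟩ | ⟨_, h2, h3⟩)
      · exact absurd h2 h
      · subst h2; subst h3
        constructor <;> (field_simp; ring)
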